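/- Let λ > 0 be real, let τ = t + iθ with t, θ real, and let m be an integer. Then the imaginary part of tr(S(λ)^{−m} · T(λ,τ)) equals 2·sinh(t/2 + mλ)·sin(θ/2)·coth(λ); consequently tr(S(λ)^{−m} · T(λ,τ)) is real if and only if sinh(t/2 + mλ)·sin(θ/2) = 0, in which case if sin(θ/2) ≠ 0 then t = −2mλ and tr(S(λ)^{−m} · T(λ,τ)) = 2·cos(θ/2)·coth(λ). -/

import Mathlib

open Matrix

/-- `S(λ) = [[cosh λ, cosh λ + 1], [cosh λ − 1, cosh λ]]` -/
noncomputable def Smat (l : ℂ) : Matrix (Fin 2) (Fin 2) ℂ :=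
  !![Complex.cosh l, Complex.cosh l + 1; Complex.cosh l - 1, Complex.cosh l]

/-- `T(λ,τ) = [[cosh(τ/2)·coth(λ/2), −sinh(τ/2)], [−sinh(τ/2), cosh(τ/2)·tanh(λ/2)]]` -/
noncomputable def Tmat (l τ : ℂ) : Matrix (Fin 2) (Fin 2) ℂ :=
  !![Complex.cosh (τ/2) * (Complex.cosh (l/2) / Complex.sinh (l/2)), -Complex.sinh (τ/2);
     -Complex.sinh (τ/2), Complex.cosh (τ/2) * (Complex.sinh (l/2) / Complex.cosh (l/2))]

/-- Closed form candidate for `S(λ)^n` with `x = n·λ`. -/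
noncomputable def Pmat (l x : ℂ) : Matrix (Fin 2) (Fin 2) ℂ :=
  !![Complex.cosh x, Complex.sinh x * (Complex.cosh l + 1) / Complex.sinh l;
     Complex.sinh x * (Complex.cosh l - 1) / Complex.sinh l, Complex.cosh x]

lemma Smat_det (l : ℂ) : (Smat l).det = 1 := by
  simp [Smat, Matrix.det_fin_two_of]; ring

lemma sinh_ne (l : ℂ) (hs : Complex.sinh (l/2) ≠ 0) (hc : Complex.cosh (l/2) ≠ 0) :
    Complex.sinh l ≠ 0 := by
  have h : Complex.sinh l = 2 * Complex.sinh (l/2) * Complex.cosh (l/2) := by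
    rw [show l = l/2 + l/2 by ring, Complex.sinh_add]; ring
  rw [h]; simp [hs, hc]

lemma Pmat_mul_S (l x : ℂ) (hs : Complex.sinh (l/2) ≠ 0) (hc : Complex.cosh (l/2) ≠ 0) :
    Pmat l x * Smat l = Pmat l (x + l) := by
  have hSh : Complex.sinh l ≠ 0 := sinh_ne l hs hc
  have hsq : Complex.cosh l ^ 2 - Complex.sinh l ^ 2 = 1 := Complex.cosh_sq_sub_sinh_sq l
  ext i j
  fin_cases i <;> fin_cases j <;>
    simp [Pmat, Smat, Matrix.mul_apply, Fin.sum_univ_two, Complex.cosh_add,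
      Complex.sinh_add] <;>
    field_simp <;>
    (first
      | ring1
      | linear_combination Complex.sinh x * hsq)

lemma Smat_zpow (l : ℂ) (hs : Complex.sinh (l/2) ≠ 0) (hc : Complex.cosh (l/2) ≠ 0) (n : ℤ) :
    Smat l ^ n = Pmat l (n * l) := by
  have hdet : IsUnit (Smat l).det := by rw [Smat_det]; exact isUnit_one
  induction n using Int.induction_on with
  | zero =>
      ext i j
      fin_cases i <;> fin_cases j <;> simp [Pmat, Matrix.one_apply]
  | succ n ih =>
      rw [Matrix.zpow_add_one hdet, ih, Pmat_mul_S l _ hs hc]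
      push_cast; ring_nf
  | pred n ih =>
      have key : Pmat l ((-(n:ℂ) - 1) * l) * Smat l = Pmat l ((-n : ℤ) * l) := by
        rw [Pmat_mul_S l _ hs hc]; push_cast; ring_nf
      have h2 := Matrix.zpow_sub_one hdet (-n : ℤ)
      rw [show (-(n:ℤ) - 1 : ℤ) = -(n:ℤ) - 1 from rfl, h2, ih,
        show ((-n : ℤ) : ℂ) * l = (-(n:ℂ) - 1) * l + l by push_cast; ring] at *
      rw [show (((-(n:ℤ) - 1 : ℤ)) : ℂ) * l = (-(n:ℂ) - 1) * l by push_cast; ring]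
      rw [← Pmat_mul_S l _ hs hc, Matrix.mul_assoc, Matrix.mul_nonsing_inv _ hdet,
        Matrix.mul_one]

lemma trace_PT (l τ x : ℂ) (hs : Complex.sinh (l/2) ≠ 0) (hc : Complex.cosh (l/2) ≠ 0) :
    (Pmat l x * Tmat l τ).trace =
      2 * (Complex.cosh l / Complex.sinh l) * Complex.cosh (τ/2 - x) := by
  have h1 : Complex.cosh l = Complex.cosh (l/2)^2 + Complex.sinh (l/2)^2 := by
    rw [show l = l/2 + l/2 by ring, Complex.cosh_add]; ring
  have h2 : Complex.sinh l = 2 * Complex.sinh (l/2) * Complex.cosh (l/2) := by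
    rw [show l = l/2 + l/2 by ring, Complex.sinh_add]; ring
  rw [Matrix.trace, Fin.sum_univ_two]
  simp only [Matrix.diag_apply, Matrix.mul_apply, Fin.sum_univ_two, Pmat, Tmat,
    Matrix.cons_val', Matrix.cons_val_zero, Matrix.cons_val_one, Matrix.head_cons,
    Matrix.empty_val', Matrix.cons_val_fin_one, Matrix.head_fin_const, Matrix.of_apply]
  rw [Complex.cosh_sub, h1, h2]
  have h2' : (2:ℂ) * Complex.sinh (l/2) * Complex.cosh (l/2) ≠ 0 := by simp [hs, hc]
  field_simp
  ring

theorem real_trace_condition (l t θ : ℝ) (hl : 0 < l) (m : ℤ) :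
    ((Smat l ^ (-m) * Tmat l ((t : ℂ) + θ * Complex.I)).trace).im =
      2 * Real.sinh (t/2 + m * l) * Real.sin (θ/2) * (Real.cosh l / Real.sinh l) ∧
    (((Smat l ^ (-m) * Tmat l ((t : ℂ) + θ * Complex.I)).trace).im = 0 ↔
      Real.sinh (t/2 + m * l) * Real.sin (θ/2) = 0) ∧
    (((Smat l ^ (-m) * Tmat l ((t : ℂ) + θ * Complex.I)).trace).im = 0 →
      Real.sin (θ/2) ≠ 0 →
      t = -2 * m * l ∧
        (Smat l ^ (-m) * Tmat l ((t : ℂ) + θ * Complex.I)).trace =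
          ((2 * Real.cos (θ/2) * (Real.cosh l / Real.sinh l) : ℝ) : ℂ)) := by
  have hl2 : (0:ℝ) < l/2 := by linarith
  have hs : Complex.sinh ((l:ℂ)/2) ≠ 0 := by
    rw [show ((l:ℂ)/2) = ((l/2 : ℝ) : ℂ) by push_cast; ring, ← Complex.ofReal_sinh]
    exact_mod_cast (Real.sinh_pos_iff.mpr hl2).ne'
  have hc : Complex.cosh ((l:ℂ)/2) ≠ 0 := by
    rw [show ((l:ℂ)/2) = ((l/2 : ℝ) : ℂ) by push_cast; ring, ← Complex.ofReal_cosh]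
    exact_mod_cast (Real.cosh_pos (x := l/2)).ne'
  set τ : ℂ := (t : ℂ) + θ * Complex.I with hτ
  set a : ℝ := t/2 + m * l with ha
  set b : ℝ := θ/2 with hb
  set K : ℝ := 2 * (Real.cosh l / Real.sinh l) with hK
  have hKpos : 0 < K := by
    have := Real.sinh_pos_iff.mpr hl
    have := Real.cosh_pos (x := l)
    positivity
  have htr : (Smat l ^ (-m) * Tmat l τ).trace =
      ((K * (Real.cosh a * Real.cos b) : ℝ) : ℂ) +
      ((K * (Real.sinh a * Real.sin b) : ℝ) : ℂ) * Complex.I := by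
    rw [Smat_zpow _ hs hc, trace_PT _ _ _ hs hc]
    rw [show τ/2 - ((-m : ℤ) : ℂ) * (l:ℂ) = ((a : ℝ) : ℂ) + ((b : ℝ) : ℂ) * Complex.I by
      rw [hτ, ha, hb]; push_cast; ring]
    rw [Complex.cosh_add, Complex.cosh_mul_I, Complex.sinh_mul_I]
    rw [show ((l:ℂ)) = ((l : ℝ) : ℂ) from rfl, ← Complex.ofReal_cosh, ← Complex.ofReal_sinh,
      ← Complex.ofReal_cosh, ← Complex.ofReal_sinh, ← Complex.ofReal_cos,
      ← Complex.ofReal_sin]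
    rw [hK]; push_cast; ring
  have him : ((Smat l ^ (-m) * Tmat l τ).trace).im = K * (Real.sinh a * Real.sin b) := by
    rw [htr]
    simp only [Complex.add_im, Complex.ofReal_im, Complex.mul_im, Complex.ofReal_re,
      Complex.I_im, Complex.I_re, mul_zero, mul_one, zero_add, zero_mul, add_zero]
  have hgoal1 : ((Smat l ^ (-m) * Tmat l τ).trace).im =
      2 * Real.sinh (t/2 + m * l) * Real.sin (θ/2) * (Real.cosh l / Real.sinh l) := by
    rw [him, hK, ha, hb]; ring
  refine ⟨hgoal1, ?_, ?_⟩
  · rw [hgoal1]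
    rw [show 2 * Real.sinh (t/2 + m * l) * Real.sin (θ/2) * (Real.cosh l / Real.sinh l)
        = (Real.sinh (t/2 + m * l) * Real.sin (θ/2)) * K by rw [hK]; ring]
    rw [mul_eq_zero, or_iff_left hKpos.ne']
  · intro h0 hsin
    rw [him] at h0
    have hprod : Real.sinh a * Real.sin b = 0 :=
      (mul_eq_zero.mp h0).resolve_left hKpos.ne'
    have hsinh : Real.sinh a = 0 := by
      rcases mul_eq_zero.mp hprod with h | h
      · exact h
      · exact absurd h hsin
    have ha0 : a = 0 := Real.sinh_eq_zero.mp hsinh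
    constructor
    · rw [ha] at ha0; linarith
    · rw [htr, ha0]
      simp only [Real.sinh_zero, Real.cosh_zero, mul_zero, zero_mul, one_mul,
        Complex.ofReal_zero, add_zero]
      norm_cast
      rw [hK, hb]; ring
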